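/- arXiv:math/0509327 — 2 statements merged into one kernel-verified Lean document; each statement's English description precedes it below -/
import Mathlib

section
/- Let S ⊆ H1, T ⊆ H2 be closed subspaces and A : H1 → H2 a bounded operator. Then A is (S,T)-complementable if and only if the Dixmier angle cosines satisfy c₀(S, closure(A*(T⊥))) < 1 and c₀(T, closure(A(S⊥))) < 1. -/
open ContinuousLinearMap Submodule
open scoped InnerProductSpace

noncomputable def dixmierAngle {H : Type*} [NormedAddCommGroup H] [InnerProductSpace ℂ H]
    (M N : Submodule ℂ H) : ℝ :=
  sSup {r : ℝ | ∃ x ∈ M, ∃ y ∈ N, ‖x‖ = 1 ∧ ‖y‖ = 1 ∧ r = ‖(inner ℂ x y : ℂ)‖}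

section Aux

variable {H : Type*} [NormedAddCommGroup H] [InnerProductSpace ℂ H]

lemma dixmier_set_bddAbove (M N : Submodule ℂ H) :
    BddAbove {r : ℝ | ∃ x ∈ M, ∃ y ∈ N, ‖x‖ = 1 ∧ ‖y‖ = 1 ∧ r = ‖(inner ℂ x y : ℂ)‖} := by
  refine ⟨1, ?_⟩
  rintro r ⟨x, -, y, -, hx, hy, rfl⟩
  calc ‖(inner ℂ x y : ℂ)‖ ≤ ‖x‖ * ‖y‖ := norm_inner_le_norm x y
  _ = 1 := by rw [hx, hy, one_mul]

lemma dixmierAngle_nonneg (M N : Submodule ℂ H) : 0 ≤ dixmierAngle M N := by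
  apply Real.sSup_nonneg
  rintro r ⟨x, -, y, -, -, -, rfl⟩
  positivity

lemma le_dixmierAngle {M N : Submodule ℂ H} {x y : H} (hx : x ∈ M) (hy : y ∈ N)
    (hx1 : ‖x‖ = 1) (hy1 : ‖y‖ = 1) : ‖(inner ℂ x y : ℂ)‖ ≤ dixmierAngle M N :=
  le_csSup (dixmier_set_bddAbove M N) ⟨x, hx, y, hy, hx1, hy1, rfl⟩

lemma inner_le_dixmier {M N : Submodule ℂ H} {x y : H} (hx : x ∈ M) (hy : y ∈ N) :
    ‖(inner ℂ x y : ℂ)‖ ≤ dixmierAngle M N * (‖x‖ * ‖y‖) := by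
  rcases eq_or_ne x 0 with rfl | hx0
  · simp
  rcases eq_or_ne y 0 with rfl | hy0
  · simp
  have hxn : (0:ℝ) < ‖x‖ := norm_pos_iff.2 hx0
  have hyn : (0:ℝ) < ‖y‖ := norm_pos_iff.2 hy0
  set x' := ((‖x‖⁻¹ : ℝ) : ℂ) • x with hx'
  set y' := ((‖y‖⁻¹ : ℝ) : ℂ) • y with hy'
  have hx'M : x' ∈ M := M.smul_mem _ hx
  have hy'N : y' ∈ N := N.smul_mem _ hy
  have hx'1 : ‖x'‖ = 1 := by
    rw [hx', norm_smul]
    simp [abs_of_pos (inv_pos.2 hxn), inv_mul_cancel₀ hxn.ne']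
  have hy'1 : ‖y'‖ = 1 := by
    rw [hy', norm_smul]
    simp [abs_of_pos (inv_pos.2 hyn), inv_mul_cancel₀ hyn.ne']
  have hle := le_dixmierAngle hx'M hy'N hx'1 hy'1
  have hinner : ‖(inner ℂ x' y' : ℂ)‖ = ‖x‖⁻¹ * (‖y‖⁻¹ * ‖(inner ℂ x y : ℂ)‖) := by
    rw [hx', hy', inner_smul_left, inner_smul_right, norm_mul, norm_mul]
    simp [abs_of_pos (inv_pos.2 hxn), abs_of_pos (inv_pos.2 hyn), mul_assoc]
  rw [hinner] at hle
  have := mul_le_mul_of_nonneg_left hle (le_of_lt (mul_pos hxn hyn))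
  calc ‖(inner ℂ x y : ℂ)‖ = ‖x‖ * ‖y‖ * (‖x‖⁻¹ * (‖y‖⁻¹ * ‖(inner ℂ x y : ℂ)‖)) := by
        field_simp
    _ ≤ ‖x‖ * ‖y‖ * dixmierAngle M N := this
    _ = dixmierAngle M N * (‖x‖ * ‖y‖) := by ring

variable [CompleteSpace H]

lemma orthogonal_closure (K : Submodule ℂ H) : (K.topologicalClosure)ᗮ = Kᗮ := by
  haveI : CompleteSpace Kᗮ := (Submodule.isClosed_orthogonal K).completeSpace_coe
  haveI : HasOrthogonalProjection Kᗮ := HasOrthogonalProjection.ofCompleteSpace (K := Kᗮ)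
  rw [← Submodule.orthogonal_orthogonal_eq_closure]
  exact Submodule.orthogonal_orthogonal (K := Kᗮ)

/-- Deutsch: c₀ < 1 implies the orthogonal complements span. -/
lemma sup_orthogonal_of_dixmier_lt (M N : Submodule ℂ H) [CompleteSpace M] [CompleteSpace N]
    (h : dixmierAngle M N < 1) : Mᗮ ⊔ Nᗮ = ⊤ := by
  set c := dixmierAngle M N with hc
  have hc0 : 0 ≤ c := dixmierAngle_nonneg M N
  set PN : H →L[ℂ] H := N.subtypeL ∘L orthogonalProjection N with hPN
  set PM : H →L[ℂ] H := M.subtypeL ∘L orthogonalProjection M with hPM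
  set TT : H →L[ℂ] H := PM ∘L PN with hTTdef
  have hbound : ∀ z, ‖TT z‖ ≤ c * ‖z‖ := by
    intro z
    set y := ((orthogonalProjection N z : N) : H) with hy
    set x := ((orthogonalProjection M y : M) : H) with hx
    have hTz : TT z = x := rfl
    have hyN : y ∈ N := (orthogonalProjection N z).2
    have hxM : x ∈ M := (orthogonalProjection M y).2
    have hyz : ‖y‖ ≤ ‖z‖ := by
      calc ‖y‖ ≤ ‖orthogonalProjection N‖ * ‖z‖ := (orthogonalProjection N).le_opNorm z
        _ ≤ 1 * ‖z‖ := by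
            exact mul_le_mul_of_nonneg_right (orthogonalProjection_norm_le N) (norm_nonneg z)
        _ = ‖z‖ := one_mul _
    have hxy : ‖x‖ ≤ ‖y‖ := by
      calc ‖x‖ ≤ ‖orthogonalProjection M‖ * ‖y‖ := (orthogonalProjection M).le_opNorm y
        _ ≤ 1 * ‖y‖ := by
            exact mul_le_mul_of_nonneg_right (orthogonalProjection_norm_le M) (norm_nonneg y)
        _ = ‖y‖ := one_mul _
    have hkey : (inner ℂ x y : ℂ) = ((‖x‖ : ℂ))^2 := by
      have horth : y - x ∈ Mᗮ := sub_starProjection_mem_orthogonal (K := M) y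
      have hz0 : (inner ℂ x (y - x) : ℂ) = 0 :=
        Submodule.inner_right_of_mem_orthogonal hxM horth
      have : (inner ℂ x y : ℂ) = inner ℂ x x + inner ℂ x (y - x) := by
        rw [← inner_add_right, add_sub_cancel]
      rw [this, hz0, add_zero, inner_self_eq_norm_sq_to_K]
      norm_num
    have hnormineq : ‖x‖^2 ≤ c * (‖x‖ * ‖y‖) := by
      have h1 : ‖(inner ℂ x y : ℂ)‖ = ‖x‖^2 := by
        rw [hkey, norm_pow, Complex.norm_real, norm_norm]
      rw [← h1]
      exact inner_le_dixmier hxM hyN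
    rw [hTz]
    rcases eq_or_ne x 0 with hx0 | hx0
    · rw [hx0, norm_zero]; positivity
    · have hxpos : (0:ℝ) < ‖x‖ := norm_pos_iff.2 hx0
      have : ‖x‖ ≤ c * ‖y‖ := by
        have := hnormineq
        rw [pow_two] at this
        nlinarith
      calc ‖x‖ ≤ c * ‖y‖ := this
        _ ≤ c * ‖z‖ := mul_le_mul_of_nonneg_left hyz hc0
  have hTTnorm : ‖TT‖ < 1 :=
    lt_of_le_of_lt (ContinuousLinearMap.opNorm_le_bound TT hc0 hbound) h
  set u := Units.oneSub TT hTTnorm with hu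
  rw [eq_top_iff]
  intro z _
  set w := ((u⁻¹ : (H →L[ℂ] H)ˣ) : H →L[ℂ] H) z with hw
  have hzw : z = w - TT w := by
    have h1 : (↑u * ↑u⁻¹ : H →L[ℂ] H) z = z := by
      rw [u.mul_inv]; rfl
    have h2 : (↑u : H →L[ℂ] H) w = w - TT w := by
      rw [hu, Units.val_oneSub]
      rfl
    rw [← h2]
    exact h1.symm
  have hmem2 : w - PN w ∈ Nᗮ := sub_starProjection_mem_orthogonal (K := N) w
  have hmem1 : PN w - TT w ∈ Mᗮ := by
    have : TT w = ((orthogonalProjection M (PN w) : M) : H) := rfl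
    rw [this]
    exact sub_starProjection_mem_orthogonal (K := M) (PN w)
  have := Submodule.add_mem_sup hmem1 hmem2
  have heq : (PN w - TT w) + (w - PN w) = w - TT w := by abel
  rw [heq] at this
  rwa [← hzw] at this

lemma dixmier_lt_of_sup_orthogonal (M N : Submodule ℂ H)
    (h : Mᗮ ⊔ Nᗮ = ⊤) : dixmierAngle M N < 1 := by
  haveI : CompleteSpace Mᗮ := (Submodule.isClosed_orthogonal M).completeSpace_coe
  haveI : CompleteSpace Nᗮ := (Submodule.isClosed_orthogonal N).completeSpace_coe
  set Φ : (Mᗮ × Nᗮ) →L[ℂ] H := Mᗮ.subtypeL.coprod Nᗮ.subtypeL with hPhi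
  have hsurj : Function.Surjective Φ := by
    intro z
    have hz : z ∈ Mᗮ ⊔ Nᗮ := by rw [h]; trivial
    obtain ⟨a, ha, b, hb, hab⟩ := Submodule.mem_sup.1 hz
    exact ⟨(⟨a, ha⟩, ⟨b, hb⟩), hab⟩
  obtain ⟨C, hC0, hC⟩ := Φ.exists_preimage_norm_le hsurj
  set KK := Real.sqrt (1 - 1 / C^2) with hKK
  have hKlt : KK < 1 := by
    rcases le_or_gt 0 (1 - 1 / C^2) with hnn | hneg
    · have h1 : 1 - 1 / C^2 < 1 := by
        have : 0 < 1 / C^2 := by positivity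
        linarith
      calc KK < Real.sqrt 1 := Real.sqrt_lt_sqrt hnn h1
        _ = 1 := Real.sqrt_one
    · rw [hKK, Real.sqrt_eq_zero'.2 hneg.le]; norm_num
  have hbound : ∀ r ∈ {r : ℝ | ∃ x ∈ M, ∃ y ∈ N, ‖x‖ = 1 ∧ ‖y‖ = 1 ∧
      r = ‖(inner ℂ x y : ℂ)‖}, r ≤ KK := by
    rintro r ⟨x, hxM, y, hyN, hx1, hy1, rfl⟩
    obtain ⟨ab, hab, habn⟩ := hC x
    set a := ((ab.1 : Mᗮ) : H) with ha
    set b := ((ab.2 : Nᗮ) : H) with hb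
    have haM : a ∈ Mᗮ := ab.1.2
    have hbN : b ∈ Nᗮ := ab.2.2
    have habx : a + b = x := hab
    have hbC : ‖b‖ ≤ C := by
      calc ‖b‖ ≤ ‖ab‖ := norm_snd_le ab
        _ ≤ C * ‖x‖ := habn
        _ = C := by rw [hx1, mul_one]
    set cc : ℂ := inner ℂ y x with hcc
    have hr : ‖(inner ℂ x y : ℂ)‖ = ‖cc‖ := by
      rw [hcc, ← inner_conj_symm y x, RCLike.norm_conj]
    set v : H := x - cc • y with hv
    have hxx : (inner ℂ x x : ℂ) = 1 := by
      rw [inner_self_eq_norm_sq_to_K, hx1]; norm_num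
    have hyy : (inner ℂ y y : ℂ) = 1 := by
      rw [inner_self_eq_norm_sq_to_K, hy1]; norm_num
    have hvv : (inner ℂ v v : ℂ) = 1 - cc * (starRingEnd ℂ) cc := by
      rw [hv]
      rw [inner_sub_left, inner_sub_right, inner_sub_right, inner_smul_left,
        inner_smul_right, inner_smul_left, inner_smul_right, hxx, hyy]
      have h1 : (inner ℂ x y : ℂ) = (starRingEnd ℂ) cc := by
        rw [hcc, inner_conj_symm]
      rw [h1, hcc]
      ring
    have hnv : ‖v‖^2 = 1 - ‖cc‖^2 := by
      have h2 := congrArg RCLike.re hvv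
      rw [inner_self_eq_norm_sq] at h2
      simpa [Complex.mul_conj, Complex.normSq_eq_norm_sq, ← Complex.ofReal_pow] using h2
    have hbv : (inner ℂ b v : ℂ) = 1 := by
      have hax : (inner ℂ a x : ℂ) = 0 := Submodule.inner_left_of_mem_orthogonal hxM haM
      have hby : (inner ℂ b y : ℂ) = 0 := Submodule.inner_left_of_mem_orthogonal hyN hbN
      have hbx : (inner ℂ b x : ℂ) = 1 := by
        have : (inner ℂ (a + b) x : ℂ) = 1 := by rw [habx, hxx]
        rwa [inner_add_left, hax, zero_add] at this
      rw [hv, inner_sub_right, inner_smul_right, hbx, hby, mul_zero, sub_zero]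
    have h1C : 1 ≤ C * ‖v‖ := by
      have : (1:ℝ) = ‖(inner ℂ b v : ℂ)‖ := by rw [hbv]; norm_num
      rw [this]
      calc ‖(inner ℂ b v : ℂ)‖ ≤ ‖b‖ * ‖v‖ := norm_inner_le_norm b v
        _ ≤ C * ‖v‖ := mul_le_mul_of_nonneg_right hbC (norm_nonneg v)
    have hvlb : 1 / C ≤ ‖v‖ := by
      rw [div_le_iff₀ hC0]
      linarith [mul_comm C ‖v‖]
    have hcc2 : ‖cc‖^2 ≤ 1 - 1 / C^2 := by
      have hv2 : 1 / C^2 ≤ ‖v‖^2 := by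
        have h0 : (0:ℝ) ≤ 1 / C := by positivity
        calc 1 / C^2 = (1/C)^2 := by rw [div_pow, one_pow]
          _ ≤ ‖v‖^2 := pow_le_pow_left₀ h0 hvlb 2
      linarith [hnv]
    rw [hr]
    calc ‖cc‖ = Real.sqrt (‖cc‖^2) := (Real.sqrt_sq (norm_nonneg cc)).symm
      _ ≤ KK := Real.sqrt_le_sqrt hcc2
  exact lt_of_le_of_lt (Real.sSup_le hbound (Real.sqrt_nonneg _)) hKlt

end Aux

section Main

variable {H₁ H₂ : Type*} [NormedAddCommGroup H₁] [InnerProductSpace ℂ H₁] [CompleteSpace H₁]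
  [NormedAddCommGroup H₂] [InnerProductSpace ℂ H₂] [CompleteSpace H₂]

lemma orthogonal_range_adjoint (B : H₁ →L[ℂ] H₂) :
    (LinearMap.range (adjoint B : H₂ →ₗ[ℂ] H₁))ᗮ = LinearMap.ker (B : H₁ →ₗ[ℂ] H₂) := by
  ext x
  simp only [Submodule.mem_orthogonal, LinearMap.mem_ker, ContinuousLinearMap.coe_coe]
  constructor
  · intro h
    apply ext_inner_left ℂ (y := (0 : H₂))
    intro v
    rw [inner_zero_right, ← adjoint_inner_left]
    exact h _ (LinearMap.mem_range_self _ v)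
  · rintro h u ⟨v, rfl⟩
    rw [ContinuousLinearMap.coe_coe, adjoint_inner_left, h, inner_zero_right]

lemma range_adjoint_of_idempotent (P : H₁ →L[ℂ] H₁) (hP : IsIdempotentElem P) :
    LinearMap.range (adjoint P : H₁ →ₗ[ℂ] H₁) = (LinearMap.ker (P : H₁ →ₗ[ℂ] H₁))ᗮ := by
  have hP' : adjoint P ∘L adjoint P = adjoint P := by
    rw [← adjoint_comp]; exact congrArg adjoint hP
  have hker : LinearMap.range (adjoint P : H₁ →ₗ[ℂ] H₁) = LinearMap.ker ((1 - adjoint P : H₁ →L[ℂ] H₁) : H₁ →ₗ[ℂ] H₁) := by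
    ext x
    simp only [LinearMap.mem_range, LinearMap.mem_ker, ContinuousLinearMap.coe_coe, ContinuousLinearMap.sub_apply,
      ContinuousLinearMap.one_apply, sub_eq_zero]
    constructor
    · rintro ⟨y, rfl⟩
      exact (DFunLike.congr_fun hP' y).symm
    · intro h; exact ⟨x, h.symm⟩
  haveI : CompleteSpace (LinearMap.range (adjoint P : H₁ →ₗ[ℂ] H₁)) := by
    rw [hker]; exact (ContinuousLinearMap.isClosed_ker _).completeSpace_coe
  rw [← orthogonal_range_adjoint, Submodule.orthogonal_orthogonal]

/-- Key lemma: existence of an idempotent `P` with `range P† = S` and `A (range P) ⊆ T`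
is equivalent to `Sᗮ + A⁻¹(T) = H₁`. -/
lemma exists_idem_iff_sup (S : Submodule ℂ H₁) [CompleteSpace S] (T : Submodule ℂ H₂)
    [CompleteSpace T] (A : H₁ →L[ℂ] H₂) :
    (∃ P : H₁ →L[ℂ] H₁, IsIdempotentElem P ∧ LinearMap.range (adjoint P : H₁ →ₗ[ℂ] H₁) = S ∧
      LinearMap.range (A ∘L P : H₁ →ₗ[ℂ] H₂) ≤ T) ↔ Sᗮ ⊔ T.comap A.toLinearMap = ⊤ := by
  constructor
  · rintro ⟨P, hP, hrange, hAP⟩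
    have hker : LinearMap.ker (P : H₁ →ₗ[ℂ] H₁) = Sᗮ := by
      rw [← hrange, orthogonal_range_adjoint]
    rw [eq_top_iff]
    intro z _
    have hPP : P (P z) = P z := by
      have := ContinuousLinearMap.ext_iff.1 hP z
      rwa [ContinuousLinearMap.mul_apply] at this
    have h1 : z - P z ∈ Sᗮ := by
      rw [← hker, LinearMap.mem_ker, ContinuousLinearMap.coe_coe, map_sub, hPP, sub_self]
    have h2 : P z ∈ T.comap A.toLinearMap := by
      rw [Submodule.mem_comap]
      exact hAP (LinearMap.mem_range_self _ z)
    have := Submodule.add_mem_sup h1 h2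
    rwa [sub_add_cancel] at this
  · intro hsum
    have hTclosed : IsClosed (T : Set H₂) :=
      (completeSpace_coe_iff_isComplete.1 ‹CompleteSpace T›).isClosed
    set L := T.comap A.toLinearMap with hLdef
    have hLclosed : IsClosed (L : Set H₁) := hTclosed.preimage A.continuous
    have hMclosed : IsClosed ((Sᗮ : Submodule ℂ H₁) : Set H₁) := Submodule.isClosed_orthogonal S
    set K := L ⊓ Sᗮ with hKdef
    have hKclosed : IsClosed (K : Set H₁) := hLclosed.inter hMclosed
    set W := L ⊓ Kᗮ with hWdef
    have hWclosed : IsClosed (W : Set H₁) := hLclosed.inter (Submodule.isClosed_orthogonal K)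
    haveI : CompleteSpace K := hKclosed.completeSpace_coe
    have hdisj : Disjoint (Sᗮ) W := by
      rw [Submodule.disjoint_def]
      intro x hxM hxW
      obtain ⟨hxL, hxKo⟩ := Submodule.mem_inf.1 hxW
      have hxK : x ∈ K := Submodule.mem_inf.2 ⟨hxL, hxM⟩
      exact inner_self_eq_zero.1 (Submodule.inner_right_of_mem_orthogonal hxK hxKo)
    have hcodis : Sᗮ ⊔ W = ⊤ := by
      rw [eq_top_iff]
      intro z _
      have hz : z ∈ Sᗮ ⊔ L := by rw [hsum]; trivial
      obtain ⟨m, hm, l, hl, rfl⟩ := Submodule.mem_sup.1 hz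
      set p := ((orthogonalProjection K l : K) : H₁) with hp
      have hpK : p ∈ K := (orthogonalProjection K l).2
      obtain ⟨hpL, hpM⟩ := Submodule.mem_inf.1 hpK
      have h1 : m + p ∈ Sᗮ := Submodule.add_mem _ hm hpM
      have h2 : l - p ∈ W := Submodule.mem_inf.2
        ⟨Submodule.sub_mem _ hl hpL, sub_starProjection_mem_orthogonal (K := K) l⟩
      have := Submodule.add_mem_sup h1 h2
      have heq : m + p + (l - p) = m + l := by abel
      rwa [heq] at this
    have hcompl : IsCompl W (Sᗮ) :=
      ⟨hdisj.symm, codisjoint_iff.2 (by rw [sup_comm]; exact hcodis)⟩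
    set proj := W.linearProjOfClosedCompl (Sᗮ) hcompl hWclosed hMclosed with hprojdef
    have hproj_apply : ∀ w : W, proj (w : H₁) = w := fun w => by
      rw [hprojdef, Submodule.coe_continuous_linearProjOfClosedCompl']
      exact Submodule.linearProjOfIsCompl_apply_left hcompl w
    set P := W.subtypeL ∘L proj with hPdef
    have hidem : IsIdempotentElem P := by
      apply ContinuousLinearMap.ext
      intro z
      rw [ContinuousLinearMap.mul_apply]
      show W.subtypeL (proj ((proj z : W) : H₁)) = W.subtypeL (proj z)
      rw [hproj_apply (proj z)]
    have hker : LinearMap.ker (P : H₁ →ₗ[ℂ] H₁) = Sᗮ := by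
      ext x
      rw [LinearMap.mem_ker, ContinuousLinearMap.coe_coe]
      have : P x = ((proj x : W) : H₁) := rfl
      rw [this, Submodule.coe_eq_zero]
      have : proj x = W.projectionOnto (Sᗮ) hcompl x := by
        rw [hprojdef, Submodule.coe_continuous_linearProjOfClosedCompl']
      rw [this, Submodule.linearProjOfIsCompl_apply_eq_zero_iff]
    refine ⟨P, hidem, ?_, ?_⟩
    · rw [range_adjoint_of_idempotent P hidem, hker, Submodule.orthogonal_orthogonal]
    · rintro v ⟨z, rfl⟩
      have hmem : ((proj z : W) : H₁) ∈ L := (Submodule.mem_inf.1 (proj z).2).1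
      exact Submodule.mem_comap.1 hmem

lemma orthogonal_closure_map (A : H₁ →L[ℂ] H₂) (T : Submodule ℂ H₂) [CompleteSpace T] :
    ((Submodule.map (adjoint A).toLinearMap Tᗮ).topologicalClosure)ᗮ = T.comap A.toLinearMap := by
  rw [_root_.orthogonal_closure]
  ext x
  rw [Submodule.mem_orthogonal, Submodule.mem_comap]
  constructor
  · intro h
    have hmem : A x ∈ Tᗮᗮ := by
      rw [Submodule.mem_orthogonal]
      intro w hw
      have := h _ (Submodule.mem_map_of_mem (f := (adjoint A).toLinearMap) hw)
      rwa [ContinuousLinearMap.coe_coe, adjoint_inner_left] at this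
    rwa [Submodule.orthogonal_orthogonal] at hmem
  · intro h u hu
    obtain ⟨w, hw, rfl⟩ := Submodule.mem_map.1 hu
    rw [ContinuousLinearMap.coe_coe, adjoint_inner_left]
    exact Submodule.inner_left_of_mem_orthogonal h hw

end Main

variable {H₁ H₂ : Type*} [NormedAddCommGroup H₁] [InnerProductSpace ℂ H₁] [CompleteSpace H₁]
  [NormedAddCommGroup H₂] [InnerProductSpace ℂ H₂] [CompleteSpace H₂]

theorem complementable_iff_dixmier_angles
    (S : Submodule ℂ H₁) [CompleteSpace S] (T : Submodule ℂ H₂) [CompleteSpace T]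
    (A : H₁ →L[ℂ] H₂) :
    (∃ (P : H₁ →L[ℂ] H₁) (Q : H₂ →L[ℂ] H₂),
      IsIdempotentElem P ∧ IsIdempotentElem Q ∧
      LinearMap.range (adjoint P : H₁ →ₗ[ℂ] H₁) = S ∧ LinearMap.range (Q : H₂ →ₗ[ℂ] H₂) = T ∧
      LinearMap.range (A ∘L P : H₁ →ₗ[ℂ] H₂) ≤ T ∧ LinearMap.range (adjoint (Q ∘L A) : H₂ →ₗ[ℂ] H₁) ≤ S) ↔
    (dixmierAngle S (Submodule.map (adjoint A).toLinearMap Tᗮ).topologicalClosure < 1 ∧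
      dixmierAngle T (Submodule.map A.toLinearMap Sᗮ).topologicalClosure < 1) := by
  have hsplit : (∃ (P : H₁ →L[ℂ] H₁) (Q : H₂ →L[ℂ] H₂),
      IsIdempotentElem P ∧ IsIdempotentElem Q ∧
      LinearMap.range (adjoint P : H₁ →ₗ[ℂ] H₁) = S ∧ LinearMap.range (Q : H₂ →ₗ[ℂ] H₂) = T ∧
      LinearMap.range (A ∘L P : H₁ →ₗ[ℂ] H₂) ≤ T ∧ LinearMap.range (adjoint (Q ∘L A) : H₂ →ₗ[ℂ] H₁) ≤ S) ↔
      ((∃ P : H₁ →L[ℂ] H₁, IsIdempotentElem P ∧ LinearMap.range (adjoint P : H₁ →ₗ[ℂ] H₁) = S ∧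
        LinearMap.range (A ∘L P : H₁ →ₗ[ℂ] H₂) ≤ T) ∧
       (∃ Q : H₂ →L[ℂ] H₂, IsIdempotentElem Q ∧ LinearMap.range (Q : H₂ →ₗ[ℂ] H₂) = T ∧
        LinearMap.range (adjoint (Q ∘L A) : H₂ →ₗ[ℂ] H₁) ≤ S)) := by
    constructor
    · rintro ⟨P, Q, h1, h2, h3, h4, h5, h6⟩
      exact ⟨⟨P, h1, h3, h5⟩, ⟨Q, h2, h4, h6⟩⟩
    · rintro ⟨⟨P, h1, h3, h5⟩, ⟨Q, h2, h4, h6⟩⟩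
      exact ⟨P, Q, h1, h2, h3, h4, h5, h6⟩
  rw [hsplit]
  have hQbridge : (∃ Q : H₂ →L[ℂ] H₂, IsIdempotentElem Q ∧ LinearMap.range (Q : H₂ →ₗ[ℂ] H₂) = T ∧
        LinearMap.range (adjoint (Q ∘L A) : H₂ →ₗ[ℂ] H₁) ≤ S) ↔
      (∃ R : H₂ →L[ℂ] H₂, IsIdempotentElem R ∧ LinearMap.range (adjoint R : H₂ →ₗ[ℂ] H₂) = T ∧
        LinearMap.range ((adjoint A) ∘L R : H₂ →ₗ[ℂ] H₁) ≤ S) := by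
    constructor
    · rintro ⟨Q, h1, h2, h3⟩
      refine ⟨adjoint Q, ?_, by rwa [adjoint_adjoint], ?_⟩
      · show adjoint Q * adjoint Q = adjoint Q
        rw [← star_eq_adjoint, ← star_mul, h1]
      · rwa [← adjoint_comp]
    · rintro ⟨R, h1, h2, h3⟩
      refine ⟨adjoint R, ?_, h2, ?_⟩
      · show adjoint R * adjoint R = adjoint R
        rw [← star_eq_adjoint, ← star_mul, h1]
      · rwa [adjoint_comp, adjoint_adjoint]
  rw [hQbridge, exists_idem_iff_sup S T A, exists_idem_iff_sup T S (adjoint A)]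
  have hN1 : ((Submodule.map (adjoint A).toLinearMap Tᗮ).topologicalClosure)ᗮ
      = T.comap A.toLinearMap := orthogonal_closure_map A T
  have hN2 : ((Submodule.map A.toLinearMap Sᗮ).topologicalClosure)ᗮ
      = S.comap (adjoint A).toLinearMap := by
    have := orthogonal_closure_map (adjoint A) S
    rwa [adjoint_adjoint] at this
  haveI : CompleteSpace (Submodule.map (adjoint A).toLinearMap Tᗮ).topologicalClosure :=
    (Submodule.isClosed_topologicalClosure _).completeSpace_coe
  haveI : CompleteSpace (Submodule.map A.toLinearMap Sᗮ).topologicalClosure :=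
    (Submodule.isClosed_topologicalClosure _).completeSpace_coe
  constructor
  · rintro ⟨h1, h2⟩
    refine ⟨dixmier_lt_of_sup_orthogonal _ _ ?_, dixmier_lt_of_sup_orthogonal _ _ ?_⟩
    · rw [hN1]; exact h1
    · rw [hN2]; exact h2
  · rintro ⟨h1, h2⟩
    have g1 := sup_orthogonal_of_dixmier_lt _ _ h1
    have g2 := sup_orthogonal_of_dixmier_lt _ _ h2
    rw [hN1] at g1
    rw [hN2] at g2
    exact ⟨g1, g2⟩
end

section
/- Let A : H1 → H2 be (S,T)-weakly complementable. Then R(A) ∩ T ⊆ R(A/(S,T)) ⊆ closure(R(A)) ∩ T and R(A*) ∩ S ⊆ R((A/(S,T))*) ⊆ closure(R(A*)) ∩ S. In particular, if R(A) is closed, then R(A/(S,T)) = R(A) ∩ T and R((A/(S,T))*) = R(A*) ∩ S. -/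
set_option synthInstance.maxHeartbeats 1000000
set_option maxHeartbeats 4000000
set_option linter.unusedVariables false
set_option linter.unusedSectionVars false
set_option linter.unusedTactic false

open ContinuousLinearMap Submodule Polynomial
open scoped InnerProductSpace

section AuxLemmas
variable {H₁ H₂ : Type*} [NormedAddCommGroup H₁] [InnerProductSpace ℂ H₁] [CompleteSpace H₁]
  [NormedAddCommGroup H₂] [InnerProductSpace ℂ H₂] [CompleteSpace H₂]
  [NormedAddCommGroup H₂] [InnerProductSpace ℂ H₂] [CompleteSpace H₂]

lemma nonneg_of_isPositive {H : Type*} [NormedAddCommGroup H] [InnerProductSpace ℂ H]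
    [CompleteSpace H] {a : H →L[ℂ] H} (ha : a.IsPositive) : 0 ≤ a :=
  (ContinuousLinearMap.nonneg_iff_isPositive a).mpr ha

lemma selfAdjoint_of_nonneg {H : Type*} [NormedAddCommGroup H] [InnerProductSpace ℂ H]
    [CompleteSpace H] {a : H →L[ℂ] H} (ha : 0 ≤ a) : IsSelfAdjoint a :=
  ((ContinuousLinearMap.nonneg_iff_isPositive a).mp ha).isSelfAdjoint

-- kernel of selfadjoint square
lemma ker_square {H : Type*} [NormedAddCommGroup H] [InnerProductSpace ℂ H]
    [CompleteSpace H] {s : H →L[ℂ] H} (hs : IsSelfAdjoint s) {z : H}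
    (h : s (s z) = 0) : s z = 0 := by
  have h1 : ⟪s z, s z⟫_ℂ = 0 := by
    calc ⟪s z, s z⟫_ℂ = ⟪(adjoint s) z, s z⟫_ℂ := by rw [isSelfAdjoint_iff'.mp hs]
    _ = ⟪z, s (s z)⟫_ℂ := adjoint_inner_left s (s z) z
    _ = 0 := by rw [h, inner_zero_right]
  exact inner_self_eq_zero.mp h1

lemma ker_adjoint_comp {B : H₁ →L[ℂ] H₂} {z : H₁}
    (h : adjoint B (B z) = 0) : B z = 0 := by
  have h1 : ⟪B z, B z⟫_ℂ = 0 := by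
    calc ⟪B z, B z⟫_ℂ = ⟪z, adjoint B (B z)⟫_ℂ := (adjoint_inner_right B z (B z)).symm
    _ = 0 := by rw [h, inner_zero_right]
  exact inner_self_eq_zero.mp h1

lemma norm_eq_of_sq_eq {x : H₂} {y : H₁} (h : ⟪x, x⟫_ℂ = ⟪y, y⟫_ℂ) : ‖x‖ = ‖y‖ := by
  have hx := inner_self_eq_norm_sq_to_K (𝕜 := ℂ) x
  have hy := inner_self_eq_norm_sq_to_K (𝕜 := ℂ) y
  rw [hx, hy] at h
  have h2 : (‖x‖ : ℝ) ^ 2 = ‖y‖ ^ 2 := by exact_mod_cast h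
  rw [← Real.sqrt_sq (norm_nonneg x), h2, Real.sqrt_sq (norm_nonneg y)]

lemma aeval_intertwine {a : H₂ →L[ℂ] H₂} {b : H₁ →L[ℂ] H₁} {x : H₁ →L[ℂ] H₂}
    (hx : a ∘L x = x ∘L b) (q : ℝ[X]) :
    (aeval a q) ∘L x = x ∘L (aeval b q) := by
  have hx' : ∀ z, a (x z) = x (b z) := fun z => congrFun (congrArg DFunLike.coe hx) z
  have hpow : ∀ (n : ℕ) (z : H₁), (a ^ n) (x z) = x ((b ^ n) z) := by
    intro n
    induction n with
    | zero => simp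
    | succ k ih =>
        intro z
        rw [pow_succ', pow_succ']
        simp only [ContinuousLinearMap.mul_apply]
        rw [ih, hx']
  induction q using Polynomial.induction_on' with
  | add p q hp hq =>
      have hp' := fun z => congrFun (congrArg DFunLike.coe hp) z
      have hq' := fun z => congrFun (congrArg DFunLike.coe hq) z
      simp only [ContinuousLinearMap.comp_apply] at hp' hq'
      ext z
      simp only [map_add, ContinuousLinearMap.add_apply, ContinuousLinearMap.comp_apply,
        hp', hq']
  | monomial n c =>
      ext z
      simp only [aeval_monomial, comp_apply, Algebra.algebraMap_eq_smul_one,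
        ContinuousLinearMap.mul_apply, smul_mul_assoc, one_mul,
        ContinuousLinearMap.smul_apply, map_smul_of_tower]
      rw [hpow n z]

lemma spectrum_subset_Icc {H : Type*} [NormedAddCommGroup H] [InnerProductSpace ℂ H]
    [CompleteSpace H] {a : H →L[ℂ] H} (ha : 0 ≤ a) : spectrum ℝ a ⊆ Set.Icc 0 ‖a‖ := by
  intro t ht
  refine ⟨spectrum_nonneg_of_nonneg ha ht, ?_⟩
  calc t ≤ ‖t‖ := le_abs_self t
  _ ≤ ‖a‖ * ‖(1 : H →L[ℂ] H)‖ := spectrum.norm_le_norm_mul_of_mem ht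
  _ ≤ ‖a‖ * 1 := by
      apply mul_le_mul_of_nonneg_left _ (norm_nonneg a)
      rw [ContinuousLinearMap.one_def]; exact ContinuousLinearMap.norm_id_le
  _ = ‖a‖ := mul_one _

lemma cfc_intertwine {a : H₂ →L[ℂ] H₂} {b : H₁ →L[ℂ] H₁} {x : H₁ →L[ℂ] H₂}
    (ha : 0 ≤ a) (hb : 0 ≤ b) (hx : a ∘L x = x ∘L b) (f : ℝ → ℝ) (hf : Continuous f) :
    cfc f a ∘L x = x ∘L cfc f b := by
  have haSA : IsSelfAdjoint a := ((ContinuousLinearMap.nonneg_iff_isPositive a).mp ha).isSelfAdjoint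
  have hbSA : IsSelfAdjoint b := ((ContinuousLinearMap.nonneg_iff_isPositive b).mp hb).isSelfAdjoint
  set M : ℝ := max ‖a‖ ‖b‖ with hM
  have hM0 : (0:ℝ) ≤ M := le_trans (norm_nonneg a) (le_max_left _ _)
  have hsa : spectrum ℝ a ⊆ Set.Icc 0 M := fun t ht =>
    ⟨(spectrum_subset_Icc ha ht).1, le_trans (spectrum_subset_Icc ha ht).2 (le_max_left _ _)⟩
  have hsb : spectrum ℝ b ⊆ Set.Icc 0 M := fun t ht =>
    ⟨(spectrum_subset_Icc hb ht).1, le_trans (spectrum_subset_Icc hb ht).2 (le_max_right _ _)⟩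
  set D := cfc f a ∘L x - x ∘L cfc f b with hD
  have key : ∀ ε : ℝ, 0 < ε → ‖D‖ ≤ 2 * ‖x‖ * ε := by
    intro ε hε
    obtain ⟨p, hp⟩ := exists_polynomial_near_of_continuousOn 0 M f
      (hf.continuousOn) ε hε
    have hda : ‖cfc f a - Polynomial.aeval a p‖ ≤ ε := by
      rw [← cfc_polynomial p a, ← cfc_sub _ _ a]
      exact norm_cfc_le hε.le fun t ht => by
        simpa [abs_sub_comm] using (hp t (hsa ht)).le
    have hdb : ‖cfc f b - Polynomial.aeval b p‖ ≤ ε := by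
      rw [← cfc_polynomial p b, ← cfc_sub _ _ b]
      exact norm_cfc_le hε.le fun t ht => by
        simpa [abs_sub_comm] using (hp t (hsb ht)).le
    have hrw : D = (cfc f a - Polynomial.aeval a p) ∘L x
        - x ∘L (cfc f b - Polynomial.aeval b p) := by
      rw [hD, ContinuousLinearMap.sub_comp, ContinuousLinearMap.comp_sub,
        aeval_intertwine hx p]
      abel
    calc ‖D‖ ≤ ‖(cfc f a - Polynomial.aeval a p) ∘L x‖
        + ‖x ∘L (cfc f b - Polynomial.aeval b p)‖ := by rw [hrw]; exact norm_sub_le _ _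
    _ ≤ ε * ‖x‖ + ‖x‖ * ε := by
        gcongr
        · exact le_trans (ContinuousLinearMap.opNorm_comp_le _ _)
            (mul_le_mul_of_nonneg_right hda (norm_nonneg x))
        · exact le_trans (ContinuousLinearMap.opNorm_comp_le _ _)
            (mul_le_mul_of_nonneg_left hdb (norm_nonneg x))
    _ = 2 * ‖x‖ * ε := by ring
  have hD0 : ‖D‖ ≤ 0 := by
    refine le_of_forall_pos_le_add fun ε hε => ?_
    have h2 : (0:ℝ) < 2 * ‖x‖ + 1 := by positivity
    calc ‖D‖ ≤ 2 * ‖x‖ * (ε / (2 * ‖x‖ + 1)) := key _ (by positivity)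
    _ ≤ ε := by
        rw [mul_div_assoc']
        rw [div_le_iff₀ h2]
        nlinarith [norm_nonneg x]
    _ ≤ 0 + ε := by linarith
  have : D = 0 := by
    rwa [← norm_le_zero_iff]
  exact sub_eq_zero.mp this

lemma rsqrt_unique {H : Type*} [NormedAddCommGroup H] [InnerProductSpace ℂ H]
    [CompleteSpace H] {a s : H →L[ℂ] H} (hs : 0 ≤ s) (h : s ∘L s = a) :
    cfc Real.sqrt a = s := by
  have hsSA : IsSelfAdjoint s :=
    ((ContinuousLinearMap.nonneg_iff_isPositive s).mp hs).isSelfAdjoint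
  have hmul : s * s = a := h
  subst hmul
  have h1 : s * s = cfc (fun t : ℝ => t * t) s := by
    rw [cfc_mul (fun t : ℝ => t) (fun t : ℝ => t) s, cfc_id' ℝ s]
  rw [h1, ← cfc_comp' Real.sqrt (fun t : ℝ => t * t) s]
  have h2 : Set.EqOn (fun x : ℝ => Real.sqrt (x * x)) id (spectrum ℝ s) := by
    intro t ht
    have h0 : 0 ≤ t := spectrum_nonneg_of_nonneg hs ht
    simp [Real.sqrt_mul_self h0]
  rw [cfc_congr h2, cfc_id ℝ s]

lemma orthogonal_range (B : H₁ →L[ℂ] H₂) :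
    (LinearMap.range (B : H₁ →ₗ[ℂ] H₂))ᗮ = LinearMap.ker (adjoint B : H₂ →ₗ[ℂ] H₁) := by
  ext u
  simp only [Submodule.mem_orthogonal, LinearMap.mem_range, LinearMap.mem_ker]
  constructor
  · intro h
    have h1 : ⟪adjoint B u, adjoint B u⟫_ℂ = 0 := by
      calc ⟪adjoint B u, adjoint B u⟫_ℂ = ⟪B (adjoint B u), u⟫_ℂ :=
            adjoint_inner_right B (adjoint B u) u
      _ = 0 := h (B (adjoint B u)) ⟨adjoint B u, rfl⟩
    exact inner_self_eq_zero.mp h1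
  · rintro h v ⟨w, rfl⟩
    calc ⟪B w, u⟫_ℂ = ⟪w, adjoint B u⟫_ℂ := (adjoint_inner_right B w u).symm
    _ = 0 := by rw [show adjoint B u = 0 from h, inner_zero_right]

lemma closure_range_eq (B : H₁ →L[ℂ] H₂) :
    (LinearMap.range (B : H₁ →ₗ[ℂ] H₂)).topologicalClosure = (LinearMap.ker (adjoint B : H₂ →ₗ[ℂ] H₁))ᗮ := by
  rw [← _root_.orthogonal_range, Submodule.orthogonal_orthogonal_eq_closure]

lemma isClosed_range_adjoint (A : H₁ →L[ℂ] H₂)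
    (h : IsClosed ((LinearMap.range (A : H₁ →ₗ[ℂ] H₂) : Submodule ℂ H₂) : Set H₂)) :
    IsClosed ((LinearMap.range (adjoint A : H₂ →ₗ[ℂ] H₁) : Submodule ℂ H₁) : Set H₁) := by
  set K : Submodule ℂ H₂ := LinearMap.range (A : H₁ →ₗ[ℂ] H₂) with hK
  haveI : CompleteSpace K := h.completeSpace_coe
  set A₀ : H₁ →L[ℂ] K := A.codRestrict K (fun x => LinearMap.mem_range_self _ x) with hA₀
  have hsurj : Function.Surjective A₀ := by
    rintro ⟨y, x, rfl⟩
    exact ⟨x, rfl⟩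
  obtain ⟨C, hC0, hC⟩ := A₀.exists_preimage_norm_le hsurj
  set G : K →L[ℂ] H₁ := (adjoint A) ∘L K.subtypeL with hG
  have hbb : ∀ z : K, ‖z‖ ≤ C * ‖G z‖ := by
    intro z
    obtain ⟨x, hx, hxn⟩ := hC z
    rcases eq_or_ne (‖z‖) 0 with h0 | h0
    · rw [h0]; positivity
    have h1 : ((‖z‖ : ℝ) : ℂ) * ‖z‖ = ⟪(z : H₂), A x⟫_ℂ := by
      have hAx : (A x : H₂) = ((A₀ x : K) : H₂) := rfl
      rw [hAx, hx, inner_self_eq_norm_sq_to_K (𝕜 := ℂ)]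
      have hzz : ‖(z : H₂)‖ = ‖z‖ := rfl
      rw [hzz]
      push_cast
      ring_nf
      rfl
    have h2 : ⟪(z : H₂), A x⟫_ℂ = ⟪G z, x⟫_ℂ := by
      rw [hG]
      simp only [ContinuousLinearMap.comp_apply, Submodule.subtypeL_apply]
      exact (adjoint_inner_left A x ((z : H₂))).symm
    have h3 : ‖z‖ * ‖z‖ ≤ ‖G z‖ * ‖x‖ := by
      calc ‖z‖ * ‖z‖ = ‖((‖z‖ : ℝ) : ℂ) * ‖z‖‖ := by
            rw [norm_mul]; norm_cast; simp [abs_of_nonneg (norm_nonneg _)]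
      _ = ‖⟪G z, x⟫_ℂ‖ := by rw [h1, h2]
      _ ≤ ‖G z‖ * ‖x‖ := norm_inner_le_norm (𝕜 := ℂ) (G z) x
    have h4 : ‖z‖ * ‖z‖ ≤ ‖G z‖ * (C * ‖z‖) :=
      h3.trans (mul_le_mul_of_nonneg_left hxn (norm_nonneg _))
    have hzpos : 0 < ‖z‖ := lt_of_le_of_ne (norm_nonneg _) (Ne.symm h0)
    nlinarith
  have hanti : AntilipschitzWith (⟨C, hC0.le⟩ : NNReal) G :=
    G.antilipschitz_of_bound (by exact_mod_cast hbb)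
  have hclosedG : IsClosed (Set.range G) :=
    hanti.isClosed_range G.uniformContinuous
  have hsets : ((LinearMap.range (adjoint A : H₂ →ₗ[ℂ] H₁) : Submodule ℂ H₁) : Set H₁) = Set.range G := by
    apply Set.eq_of_subset_of_subset
    · rintro u ⟨z, rfl⟩
      have hdec : (orthogonalProjection K z : H₂) + (orthogonalProjection Kᗮ z : H₂) = z :=
          Submodule.starProjection_add_starProjection_orthogonal z
      have hker : adjoint A ((orthogonalProjection Kᗮ z : H₂)) = 0 := by
        set u : H₂ := (orthogonalProjection Kᗮ z : H₂) with hu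
        have hmem : u ∈ Kᗮ := (orthogonalProjection Kᗮ z).2
        have h1 : ⟪adjoint A u, adjoint A u⟫_ℂ = 0 := by
          calc ⟪adjoint A u, adjoint A u⟫_ℂ = ⟪A (adjoint A u), u⟫_ℂ :=
                adjoint_inner_right A (adjoint A u) u
          _ = 0 := (Submodule.mem_orthogonal K u).mp hmem (A (adjoint A u))
                ⟨adjoint A u, rfl⟩
        exact inner_self_eq_zero.mp h1
      refine ⟨orthogonalProjection K z, ?_⟩
      rw [hG]
      simp only [ContinuousLinearMap.comp_apply, Submodule.subtypeL_apply, ContinuousLinearMap.coe_coe]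
      conv_rhs => rw [← hdec]
      rw [map_add, hker, add_zero]
    · rintro u ⟨z, rfl⟩
      exact ⟨(z : H₂), rfl⟩
  rw [hsets]
  exact hclosedG

end AuxLemmas


noncomputable def projC {H : Type*} [NormedAddCommGroup H] [InnerProductSpace ℂ H]
    [CompleteSpace H] (S : Submodule ℂ H) [CompleteSpace S] : H →L[ℂ] H :=
  S.subtypeL ∘L orthogonalProjection S

variable {H₁ H₂ : Type*} [NormedAddCommGroup H₁] [InnerProductSpace ℂ H₁] [CompleteSpace H₁]
  [NormedAddCommGroup H₂] [InnerProductSpace ℂ H₂] [CompleteSpace H₂]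

noncomputable def blk11 (S : Submodule ℂ H₁) [CompleteSpace S]
    (T : Submodule ℂ H₂) [CompleteSpace T] (A : H₁ →L[ℂ] H₂) : H₁ →L[ℂ] H₂ :=
  projC T ∘L A ∘L projC S

noncomputable def blk12 (S : Submodule ℂ H₁) [CompleteSpace S]
    (T : Submodule ℂ H₂) [CompleteSpace T] (A : H₁ →L[ℂ] H₂) : H₁ →L[ℂ] H₂ :=
  projC T ∘L A ∘L (1 - projC S)

noncomputable def blk21 (S : Submodule ℂ H₁) [CompleteSpace S]
    (T : Submodule ℂ H₂) [CompleteSpace T] (A : H₁ →L[ℂ] H₂) : H₁ →L[ℂ] H₂ :=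
  (1 - projC T) ∘L A ∘L projC S

noncomputable def blk22 (S : Submodule ℂ H₁) [CompleteSpace S]
    (T : Submodule ℂ H₂) [CompleteSpace T] (A : H₁ →L[ℂ] H₂) : H₁ →L[ℂ] H₂ :=
  (1 - projC T) ∘L A ∘L (1 - projC S)

/-- `As` is the bilateral shorted operator `A/(S,T)`: there are `Bh = |A22|^(1/2)`,
`Dh = |A22*|^(1/2)` (unique positive fourth roots of `A22* A22` resp. `A22 A22*`),
`U` the partial isometry of the polar decomposition of `A22`, and `E`, `F` the reduced
Douglas solutions of `A21 = |A22*|^(1/2) U X` and `A12* = |A22|^(1/2) X`, with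
`As = A11 - F* E`. -/
def IsShorted (S : Submodule ℂ H₁) [CompleteSpace S] (T : Submodule ℂ H₂) [CompleteSpace T]
    (A As : H₁ →L[ℂ] H₂) : Prop :=
  ∃ (Bh : H₁ →L[ℂ] H₁) (Dh : H₂ →L[ℂ] H₂) (U : H₁ →L[ℂ] H₂) (E : H₁ →L[ℂ] H₁)
      (F : H₂ →L[ℂ] H₁),
    Bh.IsPositive ∧
    Bh ∘L Bh ∘L Bh ∘L Bh = adjoint (blk22 S T A) ∘L blk22 S T A ∧
    Dh.IsPositive ∧
    Dh ∘L Dh ∘L Dh ∘L Dh = blk22 S T A ∘L adjoint (blk22 S T A) ∧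
    blk22 S T A = U ∘L (Bh ∘L Bh) ∧
    (∀ x, blk22 S T A x = 0 → U x = 0) ∧
    (Dh ∘L U) ∘L E = blk21 S T A ∧
    LinearMap.range (E : H₁ →ₗ[ℂ] H₁) ≤ (LinearMap.ker (Dh ∘L U : H₁ →ₗ[ℂ] H₂))ᗮ ∧
    Bh ∘L F = adjoint (blk12 S T A) ∧
    LinearMap.range (F : H₂ →ₗ[ℂ] H₁) ≤ (LinearMap.ker (Bh : H₁ →ₗ[ℂ] H₁))ᗮ ∧
    As = blk11 S T A - adjoint F ∘L E

section Main
variable {H₁ H₂ : Type*} [NormedAddCommGroup H₁] [InnerProductSpace ℂ H₁] [CompleteSpace H₁]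
  [NormedAddCommGroup H₂] [InnerProductSpace ℂ H₂] [CompleteSpace H₂]

lemma projC_apply_mem (T : Submodule ℂ H₂) [CompleteSpace T] (z : H₂) : projC T z ∈ T :=
  (orthogonalProjection T z).2

lemma projC_eq_self (T : Submodule ℂ H₂) [CompleteSpace T] {z : H₂} (h : z ∈ T) :
    projC T z = z := T.starProjection_eq_self_iff.mpr h

lemma projC_eq_zero (T : Submodule ℂ H₂) [CompleteSpace T] {z : H₂} (h : z ∈ Tᗮ) :
    projC T z = 0 := by
  show (T.subtypeL (orthogonalProjection T z) : H₂) = 0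
  rw [Submodule.orthogonalProjectionOnto_apply_of_mem_orthogonal h]
  rfl

lemma adjoint_projC (T : Submodule ℂ H₂) [CompleteSpace T] : adjoint (projC T) = projC T :=
  isSelfAdjoint_iff'.mp (isSelfAdjoint_starProjection T)

lemma adjoint_one_sub_projC (T : Submodule ℂ H₂) [CompleteSpace T] :
    adjoint (1 - projC T) = 1 - projC T := by
  rw [map_sub, adjoint_projC]
  congr 1
  rw [ContinuousLinearMap.one_def, adjoint_id]

lemma adjoint_triple (P : H₂ →L[ℂ] H₂) (Q : H₁ →L[ℂ] H₁) (A : H₁ →L[ℂ] H₂)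
    (hP : adjoint P = P) (hQ : adjoint Q = Q) :
    adjoint (P ∘L A ∘L Q) = Q ∘L adjoint A ∘L P := by
  rw [adjoint_comp, adjoint_comp, hP, hQ]
  ext z
  rfl

lemma shorted_facts (S : Submodule ℂ H₁) [CompleteSpace S] (T : Submodule ℂ H₂) [CompleteSpace T]
    (A As : H₁ →L[ℂ] H₂) (hAs : IsShorted S T A As) :
    (LinearMap.range (A : H₁ →ₗ[ℂ] H₂) ⊓ T ≤ LinearMap.range (As : H₁ →ₗ[ℂ] H₂) ∧
      LinearMap.range (As : H₁ →ₗ[ℂ] H₂) ≤ (LinearMap.range (A : H₁ →ₗ[ℂ] H₂)).topologicalClosure ⊓ T) ∧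
    IsShorted T S (adjoint A) (adjoint As) := by
  obtain ⟨Bh, Dh, U, E, F, hBp, hB4, hDp, hD4, hPol, hU0, hE, hErange, hF, hFrange, hAseq⟩ := hAs
  set B := blk22 S T A with hBdef
  -- basics
  have hBh0 : 0 ≤ Bh := nonneg_of_isPositive hBp
  have hDh0 : 0 ≤ Dh := nonneg_of_isPositive hDp
  have hBhSA : IsSelfAdjoint Bh := selfAdjoint_of_nonneg hBh0
  have hDhSA : IsSelfAdjoint Dh := selfAdjoint_of_nonneg hDh0
  have hBhadj : adjoint Bh = Bh := isSelfAdjoint_iff'.mp hBhSA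
  have hDhadj : adjoint Dh = Dh := isSelfAdjoint_iff'.mp hDhSA
  have hBh2SA : IsSelfAdjoint (Bh ∘L Bh) := by
    rw [isSelfAdjoint_iff', adjoint_comp, hBhadj]
  have hDh2SA : IsSelfAdjoint (Dh ∘L Dh) := by
    rw [isSelfAdjoint_iff', adjoint_comp, hDhadj]
  -- pointwise versions
  have hB4' : ∀ z, Bh (Bh (Bh (Bh z))) = adjoint B (B z) := by
    intro z
    have h := ContinuousLinearMap.ext_iff.mp hB4 z
    simpa using h
  have hD4' : ∀ z, Dh (Dh (Dh (Dh z))) = B (adjoint B z) := by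
    intro z
    have h := ContinuousLinearMap.ext_iff.mp hD4 z
    simpa using h
  have hPol' : ∀ z, B z = U (Bh (Bh z)) := by
    intro z
    have h := ContinuousLinearMap.ext_iff.mp hPol z
    simpa using h
  have hE' : ∀ z, Dh (U (E z)) = blk21 S T A z := by
    intro z
    have h := ContinuousLinearMap.ext_iff.mp hE z
    simpa using h
  have hFp : ∀ z, Bh (F z) = adjoint (blk12 S T A) z := by
    intro z
    have h := ContinuousLinearMap.ext_iff.mp hF z
    simpa using h
  have hAs' : ∀ z, As z = blk11 S T A z - adjoint F (E z) := by
    intro z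
    have h := ContinuousLinearMap.ext_iff.mp hAseq z
    simpa using h
  -- kernels
  have hker2 : ∀ z, Bh (Bh z) = 0 → Bh z = 0 := fun z h => ker_square hBhSA h
  have hker42 : ∀ z : H₁, Bh (Bh (Bh (Bh z))) = 0 → Bh (Bh z) = 0 := by
    intro z h
    have h2 : (Bh ∘L Bh) ((Bh ∘L Bh) z) = 0 := by simpa using h
    simpa using ker_square hBh2SA h2
  have hkerB : ∀ z, Bh z = 0 ↔ B z = 0 := by
    intro z
    constructor
    · intro h
      apply ker_adjoint_comp (B := B)
      rw [← hB4', h]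
      simp
    · intro h
      apply hker2
      apply hker42
      rw [hB4', h]
      simp
  have hkerD2 : ∀ z, Dh (Dh z) = 0 → Dh z = 0 := fun z h => ker_square hDhSA h
  have hkerD42 : ∀ z : H₂, Dh (Dh (Dh (Dh z))) = 0 → Dh (Dh z) = 0 := by
    intro z h
    have h2 : (Dh ∘L Dh) ((Dh ∘L Dh) z) = 0 := by simpa using h
    simpa using ker_square hDh2SA h2
  have hkerD : ∀ z, Dh z = 0 ↔ adjoint B z = 0 := by
    intro z
    constructor
    · intro h
      apply ker_adjoint_comp (B := adjoint B)
      rw [adjoint_adjoint, ← hD4', h]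
      simp
    · intro h
      apply hkerD2
      apply hkerD42
      rw [hD4', h]
      simp
  -- simple orthogonality facts
  have hRBsub : ∀ w, Bh w ∈ (LinearMap.ker (Bh : H₁ →ₗ[ℂ] H₁))ᗮ := by
    intro w
    rw [Submodule.mem_orthogonal]
    intro u hu
    have hu0 : Bh u = 0 := hu
    have h := adjoint_inner_left Bh w u
    rw [hBhadj, hu0, inner_zero_left] at h
    exact h.symm
  have hR2sub : ∀ w, Bh (Bh w) ∈ (LinearMap.ker (Bh : H₁ →ₗ[ℂ] H₁))ᗮ := fun w => hRBsub (Bh w)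
  -- density
  have hker_comp : LinearMap.ker (Bh ∘L Bh : H₁ →ₗ[ℂ] H₁) = LinearMap.ker (Bh : H₁ →ₗ[ℂ] H₁) := by
    ext z
    constructor
    · intro h
      have h' : Bh (Bh z) = 0 := h
      exact LinearMap.mem_ker.mpr (hker2 z h')
    · intro h
      have h' : Bh z = 0 := h
      show Bh (Bh z) = 0
      rw [h', map_zero]
  have hclosSub : (LinearMap.range (Bh ∘L Bh : H₁ →ₗ[ℂ] H₁)).topologicalClosure = (LinearMap.ker (Bh : H₁ →ₗ[ℂ] H₁))ᗮ := by
    rw [closure_range_eq, adjoint_comp, hBhadj, hker_comp]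
  have hdense : ((LinearMap.ker (Bh : H₁ →ₗ[ℂ] H₁))ᗮ : Set H₁) ⊆ closure (Set.range (fun w => Bh (Bh w))) := by
    intro z hz
    have h1 : z ∈ ((LinearMap.range (Bh ∘L Bh : H₁ →ₗ[ℂ] H₁)).topologicalClosure : Set H₁) := by
      rw [hclosSub]; exact hz
    rw [Submodule.topologicalClosure_coe] at h1
    have hs : (↑(LinearMap.range (Bh ∘L Bh : H₁ →ₗ[ℂ] H₁)) : Set H₁) = Set.range (fun w => Bh (Bh w)) := by
      ext v
      simp [LinearMap.mem_range]
    rwa [hs] at h1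
  have hprinciple : ∀ (C : Set H₁), IsClosed C → (∀ w, Bh (Bh w) ∈ C) →
      ∀ z ∈ (LinearMap.ker (Bh : H₁ →ₗ[ℂ] H₁))ᗮ, z ∈ C := by
    intro C hc hr z hz
    exact closure_minimal (by rintro _ ⟨w, rfl⟩; exact hr w) hc (hdense hz)
  -- norm identity
  have hBnorm : ∀ w, ‖B w‖ = ‖Bh (Bh w)‖ := by
    intro w
    apply norm_eq_of_sq_eq
    calc ⟪B w, B w⟫_ℂ = ⟪w, adjoint B (B w)⟫_ℂ := (adjoint_inner_right B w (B w)).symm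
    _ = ⟪w, Bh (Bh (Bh (Bh w)))⟫_ℂ := by rw [hB4']
    _ = ⟪Bh (Bh w), Bh (Bh w)⟫_ℂ := by
        have h' := adjoint_inner_right (Bh ∘L Bh) w ((Bh ∘L Bh) w)
        rw [isSelfAdjoint_iff'.mp hBh2SA] at h'
        simpa using h'
  -- isometry of U
  have hUiso : ∀ z ∈ (LinearMap.ker (Bh : H₁ →ₗ[ℂ] H₁))ᗮ, ‖U z‖ = ‖z‖ := by
    intro z hz
    refine hprinciple {v | ‖U v‖ = ‖v‖}
      (isClosed_eq (continuous_norm.comp U.continuous) continuous_norm) ?_ z hz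
    intro w
    show ‖U (Bh (Bh w))‖ = ‖Bh (Bh w)‖
    rw [← hPol', hBnorm]
  -- cfc chain giving Dh B = B Bh
  have hBh2nonneg : 0 ≤ Bh ∘L Bh := by
    have h := star_mul_self_nonneg Bh
    rwa [star_eq_adjoint, hBhadj, ContinuousLinearMap.mul_def] at h
  have hDh2nonneg : 0 ≤ Dh ∘L Dh := by
    have h := star_mul_self_nonneg Dh
    rwa [star_eq_adjoint, hDhadj, ContinuousLinearMap.mul_def] at h
  have hpos1 : 0 ≤ B ∘L adjoint B := by
    have h := (isPositive_one (E := H₁) (𝕜 := ℂ)).conj_adjoint B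
    have h2 : B ∘L (1 : H₁ →L[ℂ] H₁) ∘L adjoint B = B ∘L adjoint B := by ext z; rfl
    rw [h2] at h
    exact nonneg_of_isPositive h
  have hpos2 : 0 ≤ adjoint B ∘L B := by
    have h := (isPositive_one (E := H₂) (𝕜 := ℂ)).adjoint_conj B
    have h2 : adjoint B ∘L (1 : H₂ →L[ℂ] H₂) ∘L B = adjoint B ∘L B := by ext z; rfl
    rw [h2] at h
    exact nonneg_of_isPositive h
  have hsqB1 : cfc Real.sqrt (adjoint B ∘L B) = Bh ∘L Bh := by
    apply rsqrt_unique hBh2nonneg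
    rw [← hB4]
    ext z
    simp
  have hsqB2 : cfc Real.sqrt (Bh ∘L Bh) = Bh := rsqrt_unique hBh0 rfl
  have hsqD1 : cfc Real.sqrt (B ∘L adjoint B) = Dh ∘L Dh := by
    apply rsqrt_unique hDh2nonneg
    rw [← hD4]
    ext z
    simp
  have hsqD2 : cfc Real.sqrt (Dh ∘L Dh) = Dh := rsqrt_unique hDh0 rfl
  have hI1 : (Dh ∘L Dh) ∘L B = B ∘L (Bh ∘L Bh) := by
    rw [← hsqD1, ← hsqB1]
    exact cfc_intertwine hpos1 hpos2 (by ext z; simp) Real.sqrt Real.continuous_sqrt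
  have hI2 : Dh ∘L B = B ∘L Bh := by
    rw [← hsqD2, ← hsqB2]
    exact cfc_intertwine hDh2nonneg hBh2nonneg hI1 Real.sqrt Real.continuous_sqrt
  have hI2' : ∀ z, Dh (B z) = B (Bh z) := by
    intro z
    have h := ContinuousLinearMap.ext_iff.mp hI2 z
    simpa using h
  -- decomposition
  have hkclosed : IsClosed ((LinearMap.ker (Bh : H₁ →ₗ[ℂ] H₁) : Submodule ℂ H₁) : Set H₁) := by
    have h : ((LinearMap.ker (Bh : H₁ →ₗ[ℂ] H₁) : Submodule ℂ H₁) : Set H₁) = Bh ⁻¹' {0} := by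
      ext v
      simp [LinearMap.mem_ker]
    rw [h]
    exact isClosed_singleton.preimage Bh.continuous
  haveI : CompleteSpace (LinearMap.ker (Bh : H₁ →ₗ[ℂ] H₁)) := hkclosed.completeSpace_coe
  have hdecomp : ∀ z : H₁, ∃ z₁ ∈ LinearMap.ker (Bh : H₁ →ₗ[ℂ] H₁), ∃ z₂ ∈ (LinearMap.ker (Bh : H₁ →ₗ[ℂ] H₁))ᗮ, z = z₁ + z₂ := by
    intro z
    exact ⟨orthogonalProjection (LinearMap.ker (Bh : H₁ →ₗ[ℂ] H₁)) z, (orthogonalProjection _ z).2,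
      orthogonalProjection (LinearMap.ker (Bh : H₁ →ₗ[ℂ] H₁))ᗮ z, (orthogonalProjection _ z).2,
      (Submodule.starProjection_add_starProjection_orthogonal z).symm⟩
  have hUkill : ∀ z ∈ LinearMap.ker (Bh : H₁ →ₗ[ℂ] H₁), U z = 0 := fun z hz => hU0 z ((hkerB z).mp hz)
  -- intertwining for U
  have hDU : ∀ z, Dh (U z) = U (Bh z) := by
    have hon : ∀ z ∈ (LinearMap.ker (Bh : H₁ →ₗ[ℂ] H₁))ᗮ, Dh (U z) = U (Bh z) := by
      intro z hz
      refine hprinciple {v | Dh (U v) = U (Bh v)}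
        (isClosed_eq (Dh.continuous.comp U.continuous) (U.continuous.comp Bh.continuous)) ?_ z hz
      intro w
      show Dh (U (Bh (Bh w))) = U (Bh (Bh (Bh w)))
      rw [← hPol', hI2', hPol']
    intro z
    obtain ⟨z₁, hz₁, z₂, hz₂, rfl⟩ := hdecomp z
    have h1 : Bh z₁ = 0 := hz₁
    simp only [map_add]
    rw [hUkill z₁ hz₁, h1, map_zero, map_zero, zero_add, zero_add, hon z₂ hz₂]
  -- range of U lands in (ker Dh)ᗮ
  have hUrangeD : ∀ z, U z ∈ (LinearMap.ker (Dh : H₂ →ₗ[ℂ] H₂))ᗮ := by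
    intro z
    obtain ⟨z₁, hz₁, z₂, hz₂, rfl⟩ := hdecomp z
    rw [map_add]
    apply Submodule.add_mem
    · rw [hUkill z₁ hz₁]
      exact Submodule.zero_mem _
    · refine hprinciple (U ⁻¹' ((LinearMap.ker (Dh : H₂ →ₗ[ℂ] H₂))ᗮ : Set H₂))
        ((Submodule.isClosed_orthogonal _).preimage U.continuous) ?_ z₂ hz₂
      intro w
      simp only [Set.mem_preimage, SetLike.mem_coe]
      rw [← hPol', Submodule.mem_orthogonal]
      intro u hu
      have hu' : adjoint B u = 0 := (hkerD u).mp hu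
      rw [← adjoint_inner_left B w u, hu', inner_zero_left]
  -- kernel of Dh ∘ U
  have hkerDU : ∀ z, Dh (U z) = 0 ↔ Bh z = 0 := by
    intro z
    constructor
    · intro h
      rw [hDU] at h
      have hiso := hUiso (Bh z) (hRBsub z)
      rw [h, norm_zero] at hiso
      exact norm_eq_zero.mp hiso.symm
    · intro h
      have hu : U z = 0 := hU0 z ((hkerB z).mp h)
      rw [hu, map_zero]
  have hkerEq : LinearMap.ker (Dh ∘L U : H₁ →ₗ[ℂ] H₂) = LinearMap.ker (Bh : H₁ →ₗ[ℂ] H₁) := by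
    ext z
    constructor
    · intro h
      have h' : Dh (U z) = 0 := h
      exact LinearMap.mem_ker.mpr ((hkerDU z).mp h')
    · intro h
      have h' : Bh z = 0 := h
      show Dh (U z) = 0
      exact (hkerDU z).mpr h'
  have hErange' : ∀ y, E y ∈ (LinearMap.ker (Bh : H₁ →ₗ[ℂ] H₁))ᗮ := by
    intro y
    have h := hErange (LinearMap.mem_range_self (E : H₁ →ₗ[ℂ] H₁) y)
    rwa [hkerEq] at h
  have hFrange' : ∀ y, F y ∈ (LinearMap.ker (Bh : H₁ →ₗ[ℂ] H₁))ᗮ :=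
    fun y => hFrange (LinearMap.mem_range_self (F : H₂ →ₗ[ℂ] H₁) y)
  -- adjoint of F kills ker Bh
  have hFadj : ∀ z, Bh z = 0 → adjoint F z = 0 := by
    intro z hz
    have h1 : ⟪adjoint F z, adjoint F z⟫_ℂ = ⟪z, F (adjoint F z)⟫_ℂ :=
      adjoint_inner_left F (adjoint F z) z
    have h2 : ⟪z, F (adjoint F z)⟫_ℂ = 0 :=
      (Submodule.mem_orthogonal (LinearMap.ker (Bh : H₁ →ₗ[ℂ] H₁)) _).mp (hFrange' (adjoint F z)) z
        (LinearMap.mem_ker.mpr hz)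
    exact inner_self_eq_zero.mp (h1.trans h2)
  -- blk12 in terms of F
  have hblk12F : ∀ z, blk12 S T A z = adjoint F (Bh z) := by
    have h : blk12 S T A = adjoint F ∘L Bh := by
      rw [← adjoint_adjoint (blk12 S T A), ← hF, adjoint_comp, hBhadj]
    intro z
    rw [h]
    rfl
  -- splittings of A
  have hsplitS : ∀ x : H₁, A (projC S x) + A ((1 - projC S) x) = A x := by
    intro x
    rw [← map_add]
    congr 1
    simp
  have hsplit1 : ∀ x, blk11 S T A x + blk12 S T A x = projC T (A x) := by
    intro x
    have h : blk11 S T A x + blk12 S T A x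
        = projC T (A (projC S x) + A ((1 - projC S) x)) := by
      rw [map_add]
      rfl
    rw [h, hsplitS]
  have hsplit2 : ∀ x, blk21 S T A x + B x = A x - projC T (A x) := by
    intro x
    have h : blk21 S T A x + B x
        = (1 - projC T) (A (projC S x) + A ((1 - projC S) x)) := by
      rw [map_add]
      rfl
    rw [h, hsplitS]
    simp
  have hA1 : ∀ x : H₁, A (projC S x) = blk11 S T A x + blk21 S T A x := by
    intro x
    show A (projC S x) = projC T (A (projC S x)) + (1 - projC T) (A (projC S x))
    simp
  have hA2 : ∀ v : H₁, A ((1 - projC S) v) = adjoint F (Bh v) + U (Bh (Bh v)) := by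
    intro v
    have h : A ((1 - projC S) v) = blk12 S T A v + B v := by
      show A ((1 - projC S) v)
          = projC T (A ((1 - projC S) v)) + (1 - projC T) (A ((1 - projC S) v))
      simp
    rw [h, hblk12F, hPol']
  -- U* U = id on (ker Bh)ᗮ
  have hUU0 : ∀ x : H₁, adjoint U (U (Bh (Bh x))) = Bh (Bh x) := by
    intro x
    set v := adjoint U (U (Bh (Bh x))) - Bh (Bh x) with hv
    have hvw : ∀ w, ⟪v, w⟫_ℂ = 0 := by
      have hker : ∀ w ∈ LinearMap.ker (Bh : H₁ →ₗ[ℂ] H₁), ⟪v, w⟫_ℂ = 0 := by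
        intro w hw
        rw [hv, inner_sub_left]
        have e1 : ⟪adjoint U (U (Bh (Bh x))), w⟫_ℂ = ⟪U (Bh (Bh x)), U w⟫_ℂ :=
          adjoint_inner_left U w (U (Bh (Bh x)))
        have e2 : U w = 0 := hUkill w hw
        have e3 : ⟪Bh (Bh x), w⟫_ℂ = 0 :=
          (Submodule.mem_orthogonal' (LinearMap.ker (Bh : H₁ →ₗ[ℂ] H₁)) _).mp (hR2sub x) w hw
        rw [e1, e2, inner_zero_right, e3, sub_zero]
      have horth : ∀ w ∈ (LinearMap.ker (Bh : H₁ →ₗ[ℂ] H₁))ᗮ, ⟪v, w⟫_ℂ = 0 := by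
        intro w hw
        refine hprinciple {u | ⟪v, u⟫_ℂ = 0}
          (isClosed_eq (Continuous.inner continuous_const continuous_id) continuous_const)
          ?_ w hw
        intro y
        show ⟪v, Bh (Bh y)⟫_ℂ = 0
        rw [hv, inner_sub_left]
        have e1 : ⟪adjoint U (U (Bh (Bh x))), Bh (Bh y)⟫_ℂ = ⟪U (Bh (Bh x)), U (Bh (Bh y))⟫_ℂ :=
          adjoint_inner_left U (Bh (Bh y)) (U (Bh (Bh x)))
        have e2 : ⟪U (Bh (Bh x)), U (Bh (Bh y))⟫_ℂ = ⟪x, adjoint B (B y)⟫_ℂ := by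
          rw [← hPol', ← hPol']
          exact (adjoint_inner_right B x (B y)).symm
        have e3 : ⟪Bh (Bh x), Bh (Bh y)⟫_ℂ = ⟪x, adjoint B (B y)⟫_ℂ := by
          have h' := adjoint_inner_right (Bh ∘L Bh) x ((Bh ∘L Bh) y)
          rw [isSelfAdjoint_iff'.mp hBh2SA] at h'
          have h'' : ⟪x, Bh (Bh (Bh (Bh y)))⟫_ℂ = ⟪Bh (Bh x), Bh (Bh y)⟫_ℂ := by
            simpa using h'
          rw [← h'', hB4']
        rw [e1, e2, e3, sub_self]
      intro w
      obtain ⟨w₁, hw₁, w₂, hw₂, rfl⟩ := hdecomp w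
      rw [inner_add_right, hker w₁ hw₁, horth w₂ hw₂, add_zero]
    have hv0 : v = 0 := inner_self_eq_zero.mp (hvw v)
    rw [hv] at hv0
    exact sub_eq_zero.mp hv0
  have hUU : ∀ z ∈ (LinearMap.ker (Bh : H₁ →ₗ[ℂ] H₁))ᗮ, adjoint U (U z) = z := by
    intro z hz
    refine hprinciple {u | adjoint U (U u) = u}
      (isClosed_eq ((adjoint U).continuous.comp U.continuous) continuous_id) ?_ z hz
    intro w
    exact hUU0 w
  refine ⟨⟨?_, ?_⟩, ?_⟩
  -- GOAL 1 : range A ⊓ T ≤ range As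
  · rintro y hy
    rw [Submodule.mem_inf] at hy
    obtain ⟨⟨x, rfl⟩, hyT⟩ := hy
    simp only [ContinuousLinearMap.coe_coe] at hyT
    have h0 : blk21 S T A x + B x = 0 := by
      rw [hsplit2, projC_eq_self T hyT, sub_self]
    have h0' : U (Bh (E x + Bh x)) = 0 := by
      calc U (Bh (E x + Bh x)) = U (Bh (E x)) + U (Bh (Bh x)) := by rw [map_add, map_add]
      _ = Dh (U (E x)) + U (Bh (Bh x)) := by rw [hDU]
      _ = blk21 S T A x + B x := by rw [hE', ← hPol']
      _ = 0 := h0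
    have h1 : Bh (E x + Bh x) = 0 := by
      have hiso := hUiso _ (hRBsub (E x + Bh x))
      rw [h0', norm_zero] at hiso
      exact norm_eq_zero.mp hiso.symm
    have h2 : adjoint F (E x) + adjoint F (Bh x) = 0 := by
      rw [← map_add]
      exact hFadj _ h1
    refine ⟨x, ?_⟩
    have h3 : A x = projC T (A x) := (projC_eq_self T hyT).symm
    simp only [ContinuousLinearMap.coe_coe]
    rw [hAs' x, h3, ← hsplit1, hblk12F]
    have h4 : adjoint F (Bh x) = - adjoint F (E x) := by
      rw [eq_neg_iff_add_eq_zero, add_comm]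
      exact h2
    rw [h4]
    abel
  -- GOAL 2 : range As ≤ closure (range A) ⊓ T
  · rintro y hy
    obtain ⟨x, rfl⟩ := hy
    rw [Submodule.mem_inf]
    constructor
    · -- closure part
      set Φ : H₁ → H₂ :=
        fun e => blk11 S T A x + blk21 S T A x - adjoint F e - U (Bh e) with hΦ
      have hΦcont : Continuous Φ := by
        apply Continuous.sub
        apply Continuous.sub continuous_const (adjoint F).continuous
        exact U.continuous.comp Bh.continuous
      have hΦA : ∀ v, Φ (Bh v) ∈ LinearMap.range (A : H₁ →ₗ[ℂ] H₂) := by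
        intro v
        refine ⟨projC S x - (1 - projC S) v, ?_⟩
        rw [ContinuousLinearMap.coe_coe, map_sub, hA1, hA2, hΦ]
        abel
      have hAsΦ : As x = Φ (E x) := by
        rw [hAs' x, hΦ]
        have h5 : blk21 S T A x = U (Bh (E x)) := by rw [← hE', hDU]
        rw [h5]
        abel
      have hEx : E x ∈ closure (Set.range fun w => Bh (Bh w)) := hdense (hErange' x)
      have himg : Φ (E x) ∈ closure (↑(LinearMap.range (A : H₁ →ₗ[ℂ] H₂)) : Set H₂) := by
        have h1 : Φ (E x) ∈ Φ '' (closure (Set.range fun w => Bh (Bh w))) := ⟨E x, hEx, rfl⟩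
        have h2 := image_closure_subset_closure_image (s := Set.range fun w => Bh (Bh w)) hΦcont
        have h3 : Φ '' (Set.range fun w => Bh (Bh w)) ⊆ (↑(LinearMap.range (A : H₁ →ₗ[ℂ] H₂)) : Set H₂) := by
          rintro _ ⟨_, ⟨w, rfl⟩, rfl⟩
          exact hΦA (Bh w)
        exact closure_mono h3 (h2 h1)
      rw [← SetLike.mem_coe, Submodule.topologicalClosure_coe, ContinuousLinearMap.coe_coe, hAsΦ]
      exact himg
    · -- T part
      have hFT : ∀ w, adjoint F w ∈ T := by
        intro w
        have hmem : adjoint F w ∈ Tᗮᗮ := by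
          rw [Submodule.mem_orthogonal]
          intro u hu
          have hFu : F u = 0 := by
            have hz : adjoint (blk12 S T A) u = 0 := by
              have hadj : adjoint (blk12 S T A)
                  = (1 - projC S) ∘L adjoint A ∘L projC T := by
                show adjoint (projC T ∘L A ∘L (1 - projC S)) = _
                exact adjoint_triple _ _ _ (adjoint_projC T) (adjoint_one_sub_projC S)
              rw [hadj]
              show (1 - projC S) (adjoint A (projC T u)) = 0
              rw [projC_eq_zero T hu, map_zero, map_zero]
            have h1 : Bh (F u) = 0 := by rw [hFp, hz]
            have h2 : ⟪F u, F u⟫_ℂ = 0 :=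
              (Submodule.mem_orthogonal (LinearMap.ker (Bh : H₁ →ₗ[ℂ] H₁)) _).mp (hFrange' u) (F u)
                (LinearMap.mem_ker.mpr h1)
            exact inner_self_eq_zero.mp h2
          calc ⟪u, adjoint F w⟫_ℂ = ⟪F u, w⟫_ℂ := adjoint_inner_right F u w
          _ = 0 := by rw [hFu, inner_zero_left]
        rwa [Submodule.orthogonal_orthogonal] at hmem
      rw [ContinuousLinearMap.coe_coe, hAs']
      apply Submodule.sub_mem
      · have h6 : blk11 S T A x = projC T (A (projC S x)) := rfl
        rw [h6]
        exact projC_apply_mem T _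
      · exact hFT (E x)
  -- GOAL 3 : IsShorted T S A† As†
  · have hadjS : adjoint (1 - projC S) = 1 - projC S := adjoint_one_sub_projC S
    have hadjT : adjoint (1 - projC T) = 1 - projC T := adjoint_one_sub_projC T
    have hblk22' : blk22 T S (adjoint A) = adjoint B := by
      rw [hBdef]
      show (1 - projC S) ∘L adjoint A ∘L (1 - projC T)
          = adjoint ((1 - projC T) ∘L A ∘L (1 - projC S))
      rw [adjoint_triple _ _ _ hadjT hadjS]
    have hblk21' : blk21 T S (adjoint A) = adjoint (blk12 S T A) := by
      show (1 - projC S) ∘L adjoint A ∘L projC T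
          = adjoint (projC T ∘L A ∘L (1 - projC S))
      rw [adjoint_triple _ _ _ (adjoint_projC T) hadjS]
    have hblk12' : blk12 T S (adjoint A) = adjoint (blk21 S T A) := by
      show projC S ∘L adjoint A ∘L (1 - projC T)
          = adjoint ((1 - projC T) ∘L A ∘L projC S)
      rw [adjoint_triple _ _ _ hadjT (adjoint_projC S)]
    have hblk11' : blk11 T S (adjoint A) = adjoint (blk11 S T A) := by
      show projC S ∘L adjoint A ∘L projC T
          = adjoint (projC T ∘L A ∘L projC S)
      rw [adjoint_triple _ _ _ (adjoint_projC T) (adjoint_projC S)]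
    have hD2U : (Dh ∘L Dh) ∘L U = U ∘L (Bh ∘L Bh) := by
      ext z
      simp only [ContinuousLinearMap.comp_apply]
      rw [hDU, hDU]
    have hpolar' : adjoint B = adjoint U ∘L (Dh ∘L Dh) := by
      have e1 := congrArg ContinuousLinearMap.adjoint hD2U
      rw [adjoint_comp (Dh ∘L Dh) U, adjoint_comp U (Bh ∘L Bh),
        isSelfAdjoint_iff'.mp hDh2SA, isSelfAdjoint_iff'.mp hBh2SA] at e1
      have e2 : adjoint B = (Bh ∘L Bh) ∘L adjoint U := by
        rw [hPol, adjoint_comp U (Bh ∘L Bh), isSelfAdjoint_iff'.mp hBh2SA]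
      rw [e2, e1]
    refine ⟨Dh, Bh, adjoint U, U ∘L F, U ∘L E, hDp, ?_, hBp, ?_, ?_, ?_, ?_, ?_, ?_, ?_, ?_⟩
    · rw [hblk22', adjoint_adjoint]
      exact hD4
    · rw [hblk22', adjoint_adjoint]
      exact hB4
    · rw [hblk22']
      exact hpolar'
    · intro x hx
      rw [hblk22'] at hx
      have hDx : Dh x = 0 := (hkerD x).mpr hx
      have h1 : ⟪adjoint U x, adjoint U x⟫_ℂ = ⟪x, U (adjoint U x)⟫_ℂ :=
        adjoint_inner_left U (adjoint U x) x
      have h2 : ⟪x, U (adjoint U x)⟫_ℂ = 0 :=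
        (Submodule.mem_orthogonal (LinearMap.ker (Dh : H₂ →ₗ[ℂ] H₂)) _).mp (hUrangeD (adjoint U x)) x
          (LinearMap.mem_ker.mpr hDx)
      exact inner_self_eq_zero.mp (h1.trans h2)
    · rw [hblk21', ← hF]
      ext z
      simp only [ContinuousLinearMap.comp_apply]
      rw [hUU (F z) (hFrange' z)]
    · rintro y hy
      obtain ⟨w, rfl⟩ := hy
      rw [Submodule.mem_orthogonal]
      intro u hu
      have hu' : Bh (adjoint U u) = 0 := hu
      show ⟪u, (U ∘L F) w⟫_ℂ = 0
      have e1 : ⟪adjoint U u, F w⟫_ℂ = ⟪u, U (F w)⟫_ℂ := adjoint_inner_left U (F w) u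
      have e2 : ⟪adjoint U u, F w⟫_ℂ = 0 :=
        (Submodule.mem_orthogonal (LinearMap.ker (Bh : H₁ →ₗ[ℂ] H₁)) _).mp (hFrange' w) (adjoint U u)
          (LinearMap.mem_ker.mpr hu')
      show ⟪u, U (F w)⟫_ℂ = 0
      rw [← e1, e2]
    · rw [hblk12', adjoint_adjoint, ← hE]
      ext z
      rfl
    · rintro y hy
      obtain ⟨w, rfl⟩ := hy
      exact hUrangeD (E w)
    · rw [hblk11', hAseq, map_sub, adjoint_comp, adjoint_adjoint]
      congr 1
      rw [adjoint_comp]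
      ext z
      simp only [ContinuousLinearMap.comp_apply]
      rw [hUU (F z) (hFrange' z)]
end Main

theorem range_shorted_weak
    (S : Submodule ℂ H₁) [CompleteSpace S] (T : Submodule ℂ H₂) [CompleteSpace T]
    (A As : H₁ →L[ℂ] H₂) (hAs : IsShorted S T A As) :
    (LinearMap.range (A : H₁ →ₗ[ℂ] H₂) ⊓ T ≤ LinearMap.range (As : H₁ →ₗ[ℂ] H₂) ∧
      LinearMap.range (As : H₁ →ₗ[ℂ] H₂) ≤ (LinearMap.range (A : H₁ →ₗ[ℂ] H₂)).topologicalClosure ⊓ T) ∧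
    (LinearMap.range (adjoint A : H₂ →ₗ[ℂ] H₁) ⊓ S ≤ LinearMap.range (adjoint As : H₂ →ₗ[ℂ] H₁) ∧
      LinearMap.range (adjoint As : H₂ →ₗ[ℂ] H₁) ≤ (LinearMap.range (adjoint A : H₂ →ₗ[ℂ] H₁)).topologicalClosure ⊓ S) ∧
    (IsClosed ((LinearMap.range (A : H₁ →ₗ[ℂ] H₂) : Submodule ℂ H₂) : Set H₂) →
      LinearMap.range (As : H₁ →ₗ[ℂ] H₂) = LinearMap.range (A : H₁ →ₗ[ℂ] H₂) ⊓ T ∧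
      LinearMap.range (adjoint As : H₂ →ₗ[ℂ] H₁) = LinearMap.range (adjoint A : H₂ →ₗ[ℂ] H₁) ⊓ S) := by
  obtain ⟨hprim, hdualShort⟩ := shorted_facts S T A As hAs
  obtain ⟨hdual, _⟩ := shorted_facts T S (adjoint A) (adjoint As) hdualShort
  refine ⟨hprim, hdual, ?_⟩
  intro hcl
  have hclosEq : (LinearMap.range (A : H₁ →ₗ[ℂ] H₂)).topologicalClosure = LinearMap.range (A : H₁ →ₗ[ℂ] H₂) :=
    SetLike.coe_injective (by rw [Submodule.topologicalClosure_coe, hcl.closure_eq])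
  have hcl' := isClosed_range_adjoint A hcl
  have hclosEq' : (LinearMap.range (adjoint A : H₂ →ₗ[ℂ] H₁)).topologicalClosure
      = LinearMap.range (adjoint A : H₂ →ₗ[ℂ] H₁) :=
    SetLike.coe_injective (by rw [Submodule.topologicalClosure_coe, hcl'.closure_eq])
  constructor
  · refine le_antisymm ?_ hprim.1
    calc LinearMap.range (As : H₁ →ₗ[ℂ] H₂) ≤ (LinearMap.range (A : H₁ →ₗ[ℂ] H₂)).topologicalClosure ⊓ T := hprim.2
    _ = LinearMap.range (A : H₁ →ₗ[ℂ] H₂) ⊓ T := by rw [hclosEq]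
  · refine le_antisymm ?_ hdual.1
    calc LinearMap.range (adjoint As : H₂ →ₗ[ℂ] H₁)
        ≤ (LinearMap.range (adjoint A : H₂ →ₗ[ℂ] H₁)).topologicalClosure ⊓ S := hdual.2
    _ = LinearMap.range (adjoint A : H₂ →ₗ[ℂ] H₁) ⊓ S := by rw [hclosEq']
end
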